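/- For any two unit quaternions q and q̂, the spectral (operator Euclidean) norm of the difference of the associated 3D rotation matrices satisfies ‖R(q̂) − R(q)‖₂ = |q̂ − q|₂ · √(4 − |q̂ − q|₂²). -/

import Mathlib

noncomputable section

abbrev H := Quaternion ℝ

/-- The pure quaternions `i, j, k` identified with the canonical basis of `ℝ³`. -/
def pureBasis : Fin 3 → H := ![⟨0,1,0,0⟩, ⟨0,0,1,0⟩, ⟨0,0,0,1⟩]

/-- The `i`-th coordinate of a quaternion in the basis `i, j, k` (pure part). -/
def pureComp (i : Fin 3) (q : H) : ℝ := ![q.imI, q.imJ, q.imK] i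

/-- The 3×3 rotation matrix associated to a unit quaternion `q`,
given by the conjugation action `v ↦ q v q̄` on pure quaternions. -/
def rotMat (q : H) : Matrix (Fin 3) (Fin 3) ℝ :=
  Matrix.of fun i j => pureComp i (q * pureBasis j * star q)

/-- Euclidean norm of a vector. -/
def euclNorm {n : ℕ} (v : Fin n → ℝ) : ℝ := Real.sqrt (∑ i, ‖v i‖ ^ 2)

/-- Operator (spectral) norm of a real matrix with respect to Euclidean norms. -/
def opNorm {n : ℕ} (A : Matrix (Fin n) (Fin n) ℝ) : ℝ :=
  sSup {r | ∃ v : Fin n → ℝ, euclNorm v = 1 ∧ r = euclNorm (A.mulVec v)}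


def Qv (v : Fin 3 → ℝ) : H := ⟨0, v 0, v 1, v 2⟩

lemma mulVec_rot (q : H) (v : Fin 3 → ℝ) (i : Fin 3) :
    (rotMat q).mulVec v i = pureComp i (q * Qv v * star q) := by
  have h0 : (Qv v).re = 0 := rfl
  have h1 : (Qv v).imI = v 0 := rfl
  have h2 : (Qv v).imJ = v 1 := rfl
  have h3 : (Qv v).imK = v 2 := rfl
  fin_cases i <;>
  · simp [rotMat, pureComp, pureBasis, h0, h1, h2, h3, Matrix.mulVec, dotProduct, Fin.sum_univ_three,
      Quaternion.re_mul, Quaternion.imI_mul, Quaternion.imJ_mul, Quaternion.imK_mul]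
    ring

lemma norm_eq_sqrt_normSq (p : H) : ‖p‖ = Real.sqrt (Quaternion.normSq p) := by
  rw [← Real.sqrt_sq (norm_nonneg p)]
  congr 1
  rw [sq, ← Quaternion.normSq_eq_norm_mul_self]

lemma euclNorm_eq_norm (p : H) (hp : p.re = 0) :
    euclNorm (fun i => pureComp i p) = ‖p‖ := by
  rw [euclNorm, norm_eq_sqrt_normSq]
  congr 1
  simp [Fin.sum_univ_three, pureComp, Quaternion.normSq_def', hp]

lemma normSq_eq_one {q : H} (hq : ‖q‖ = 1) : Quaternion.normSq q = 1 := by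
  rw [Quaternion.normSq_eq_norm_mul_self, hq, one_mul]

lemma re_conj (q V : H) (hV : V.re = 0) : (q * V * star q).re = 0 := by
  simp [Quaternion.re_mul, hV]
  ring

/-- pure part -/
def pureim (x : H) : H := x - (x.re : H)

lemma pureim_re (x : H) : (pureim x).re = 0 := by simp [pureim]

lemma comm_norm (q qhat : H) (hq : ‖q‖ = 1) (hqhat : ‖qhat‖ = 1) (v : Fin 3 → ℝ) :
    euclNorm ((rotMat qhat - rotMat q).mulVec v)
      = ‖pureim (star q * qhat) * Qv v - Qv v * pureim (star q * qhat)‖ := by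
  set r : H := star q * qhat with hrdef
  set V : H := Qv v with hVdef
  set w : H := pureim r with hwdef
  have hVre : V.re = 0 := rfl
  have h2 : q * star q = 1 := by
    rw [Quaternion.self_mul_star, normSq_eq_one hq, Quaternion.coe_one]
  have hrnorm : ‖r‖ = 1 := by rw [hrdef, norm_mul, Quaternion.norm_star, hq, hqhat, one_mul]
  have hrr : r * star r = 1 := by
    rw [Quaternion.self_mul_star, normSq_eq_one hrnorm, Quaternion.coe_one]
  have e1 : qhat = q * r := by rw [hrdef, ← mul_assoc, h2, one_mul]
  have hD : (rotMat qhat - rotMat q).mulVec v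
      = fun i => pureComp i (qhat * V * star qhat - q * V * star q) := by
    funext i
    rw [Matrix.sub_mulVec, Pi.sub_apply, mulVec_rot, mulVec_rot]
    fin_cases i <;> simp [pureComp, hVdef]
  rw [hD, euclNorm_eq_norm _ (by simp [Quaternion.re_sub, re_conj _ _ hVre])]
  have key : qhat * V * star qhat - q * V * star q = q * ((r * V - V * r) * star r) * star q := by
    have h3 : q * V * star q = q * (V * (r * star r)) * star q := by rw [hrr, mul_one]
    rw [e1, star_mul, h3]
    noncomm_ring
  rw [key]
  have hcomm : r * V - V * r = w * V - V * w := by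
    have : r = (r.re : H) + w := by rw [hwdef, pureim, add_sub_cancel]
    rw [this]
    have hc : (r.re : H) * V = V * (r.re : H) := Quaternion.coe_commutes r.re V
    noncomm_ring
    rw [hc]
    abel
  rw [norm_mul, norm_mul, norm_mul, Quaternion.norm_star, Quaternion.norm_star, hq, hrnorm,
    one_mul, mul_one, mul_one, hcomm]

lemma normSq_comm (w V : H) (hw : w.re = 0) (hV : V.re = 0) :
    Quaternion.normSq (w * V - V * w)
      = 4 * (Quaternion.normSq w * Quaternion.normSq V
          - (w.imI * V.imI + w.imJ * V.imJ + w.imK * V.imK) ^ 2) := by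
  simp [Quaternion.normSq_def', Quaternion.re_mul, Quaternion.imI_mul, Quaternion.imJ_mul,
    Quaternion.imK_mul, hw, hV]
  ring

lemma pureComp_Qv (v : Fin 3 → ℝ) : (fun i => pureComp i (Qv v)) = v := by
  funext i; fin_cases i <;> rfl

lemma euclNorm_Qv (v : Fin 3 → ℝ) : ‖Qv v‖ = euclNorm v := by
  rw [← euclNorm_eq_norm (Qv v) rfl, pureComp_Qv]

lemma sqrt_four : Real.sqrt 4 = 2 := by
  rw [show (4:ℝ) = 2^2 by norm_num, Real.sqrt_sq]; norm_num


/-- For unit quaternions `q, q̂`,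
`‖R(q̂) − R(q)‖₂ = |q̂ − q|₂ √(4 − |q̂ − q|₂²)`. -/
theorem opNorm_rotMat_sub_rotMat (q qhat : H) (hq : ‖q‖ = 1) (hqhat : ‖qhat‖ = 1) :
    opNorm (rotMat qhat - rotMat q) = ‖qhat - q‖ * Real.sqrt (4 - ‖qhat - q‖ ^ 2) := by
  set r : H := star q * qhat with hrdef
  set w : H := pureim r with hwdef
  have hwre : w.re = 0 := pureim_re r
  have h2 : q * star q = 1 := by
    rw [Quaternion.self_mul_star, normSq_eq_one hq, Quaternion.coe_one]
  have hrnorm : ‖r‖ = 1 := by rw [hrdef, norm_mul, Quaternion.norm_star, hq, hqhat, one_mul]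
  have hnr : Quaternion.normSq r = 1 := normSq_eq_one hrnorm
  have hnr' : r.re^2 + r.imI^2 + r.imJ^2 + r.imK^2 = 1 := by
    linear_combination hnr - Quaternion.normSq_def' r
  have e1 : qhat = q * r := by rw [hrdef, ← mul_assoc, h2, one_mul]
  -- upper bound
  have hub : ∀ x ∈ {x | ∃ v : Fin 3 → ℝ, euclNorm v = 1 ∧
      x = euclNorm ((rotMat qhat - rotMat q).mulVec v)}, x ≤ 2 * ‖w‖ := by
    rintro x ⟨v, hv, rfl⟩
    rw [comm_norm q qhat hq hqhat v]
    have hVn : ‖Qv v‖ = 1 := by rw [euclNorm_Qv, hv]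
    calc ‖w * Qv v - Qv v * w‖ ≤ ‖w * Qv v‖ + ‖Qv v * w‖ := norm_sub_le _ _
      _ = 2 * ‖w‖ := by rw [norm_mul, norm_mul, hVn]; ring
  -- achieving vector
  have hach : ∃ v : Fin 3 → ℝ, euclNorm v = 1 ∧
      w.imI * v 0 + w.imJ * v 1 + w.imK * v 2 = 0 := by
    by_cases h : w.imI = 0 ∧ w.imJ = 0
    · refine ⟨![1,0,0], ?_, by simp [h.1, h.2]⟩
      simp [euclNorm, Fin.sum_univ_three]
    · push_neg at h
      set a := w.imI; set b := w.imJ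
      have hab : 0 < a^2 + b^2 := by
        rcases eq_or_ne a 0 with ha | ha
        · have := h ha; positivity
        · positivity
      set s := Real.sqrt (a^2 + b^2) with hsdef
      have hs2 : s^2 = a^2 + b^2 := Real.sq_sqrt (le_of_lt hab)
      have hs0 : s ≠ 0 := by positivity
      refine ⟨![-b/s, a/s, 0], ?_, by simp; ring⟩
      rw [euclNorm, Fin.sum_univ_three]
      have : ‖(![-b/s, a/s, 0] : Fin 3 → ℝ) 0‖^2 + ‖(![-b/s, a/s, 0] : Fin 3 → ℝ) 1‖^2
          + ‖(![-b/s, a/s, 0] : Fin 3 → ℝ) 2‖^2 = 1 := by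
        simp [Real.norm_eq_abs, sq_abs]
        field_simp
        simp only [sq_abs]; linarith [hs2]
      rw [this, Real.sqrt_one]
  obtain ⟨v₀, hv₀, hdot⟩ := hach
  have hmem : 2 * ‖w‖ ∈ {x | ∃ v : Fin 3 → ℝ, euclNorm v = 1 ∧
      x = euclNorm ((rotMat qhat - rotMat q).mulVec v)} := by
    refine ⟨v₀, hv₀, ?_⟩
    rw [comm_norm q qhat hq hqhat v₀]
    have hVn : ‖Qv v₀‖ = 1 := by rw [euclNorm_Qv, hv₀]
    show 2 * ‖w‖ = ‖w * Qv v₀ - Qv v₀ * w‖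
    rw [norm_eq_sqrt_normSq (w * Qv v₀ - Qv v₀ * w), normSq_comm w (Qv v₀) hwre rfl]
    have hd0 : w.imI * (Qv v₀).imI + w.imJ * (Qv v₀).imJ + w.imK * (Qv v₀).imK = 0 := hdot
    rw [hd0, normSq_eq_one hVn]
    rw [show (4:ℝ) * (Quaternion.normSq w * 1 - 0^2) = 4 * Quaternion.normSq w by ring,
      Real.sqrt_mul (by norm_num : (0:ℝ) ≤ 4), sqrt_four, ← norm_eq_sqrt_normSq]
  have hsup : opNorm (rotMat qhat - rotMat q) = 2 * ‖w‖ := by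
    rw [opNorm]
    exact IsGreatest.csSup_eq ⟨hmem, hub⟩
  rw [hsup]
  -- final algebra
  have hd : qhat - q = q * (r - 1) := by rw [e1]; noncomm_ring
  have hdn : ‖qhat - q‖ = ‖r - 1‖ := by rw [hd, norm_mul, hq, one_mul]
  have hd2 : ‖qhat - q‖^2 = 2 - 2 * r.re := by
    rw [hdn, sq, ← Quaternion.normSq_eq_norm_mul_self, Quaternion.normSq_def']
    simp only [Quaternion.re_sub, Quaternion.imI_sub, Quaternion.imJ_sub, Quaternion.imK_sub,
      Quaternion.re_one, Quaternion.imI_one, Quaternion.imJ_one, Quaternion.imK_one]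
    linear_combination hnr'
  have hw2 : ‖w‖^2 = 1 - r.re^2 := by
    rw [sq, ← Quaternion.normSq_eq_norm_mul_self, Quaternion.normSq_def']
    simp only [hwdef, pureim, Quaternion.re_sub, Quaternion.imI_sub, Quaternion.imJ_sub,
      Quaternion.imK_sub, Quaternion.re_coe, Quaternion.imI_coe, Quaternion.imJ_coe,
      Quaternion.imK_coe]
    linear_combination hnr'
  have h4 : ‖qhat - q‖^2 * (4 - ‖qhat - q‖^2) = 4 * ‖w‖^2 := by
    rw [hd2, hw2]; ring
  calc 2 * ‖w‖ = Real.sqrt (4 * ‖w‖^2) := by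
        rw [Real.sqrt_mul (by norm_num : (0:ℝ) ≤ 4), sqrt_four, Real.sqrt_sq (norm_nonneg w)]
    _ = Real.sqrt (‖qhat - q‖^2 * (4 - ‖qhat - q‖^2)) := by rw [h4]
    _ = ‖qhat - q‖ * Real.sqrt (4 - ‖qhat - q‖^2) := by
        rw [Real.sqrt_mul (sq_nonneg _), Real.sqrt_sq (norm_nonneg _)]
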